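/- Let G(z;t) = π^{-1/4} exp(−z²/2) Σ_{m=0}^{d-1} exp(−2πimt/d) g̃_m Θ₃(πm/d − iz√(π/(2d)), i/d), representing the state X^t|g⟩ with t ∈ ℝ. Then for every β ∈ ℤ and all z ∈ ℂ, t ∈ ℝ: if G(ζ; t) = 0 then G(ζ + β√(2π/d); t + β) = 0. Equivalently, the zero set of G(·; t+β) equals the zero set of G(·; t) shifted by β√(2π/d). -/

import Mathlib

open Complex

noncomputable def Theta3 (u τ : ℂ) : ℂ :=
  ∑' n : ℤ, Complex.exp (Real.pi * I * τ * (n : ℂ) ^ 2 + 2 * I * (n : ℂ) * u)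

noncomputable def Gt (d : ℕ) (gt : Fin d → ℂ) (z : ℂ) (t : ℝ) : ℂ :=
  (Real.pi ^ (-(1 / 4 : ℝ)) : ℝ) * Complex.exp (-(z ^ 2) / 2) *
    ∑ m : Fin d, Complex.exp (-(2 * Real.pi * I * m * t) / d) * gt m *
      Theta3 ((Real.pi * m) / d - I * z * Real.sqrt (Real.pi / (2 * d))) (I / d)

lemma theta_quasi (τ u : ℂ) (k : ℤ) :
    Theta3 (u + Real.pi * τ * k) τ
      = Complex.exp (-(Real.pi * I * τ * (k:ℂ)^2) - 2*I*(k:ℂ)*u) * Theta3 u τ := by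
  unfold Theta3
  rw [← tsum_mul_left]
  rw [← Equiv.tsum_eq (Equiv.addRight k)
    (fun n : ℤ => Complex.exp (-(Real.pi * I * τ * (k:ℂ)^2) - 2*I*(k:ℂ)*u) *
      Complex.exp (Real.pi * I * τ * (n : ℂ) ^ 2 + 2 * I * (n : ℂ) * u))]
  refine tsum_congr fun n => ?_
  simp only [Equiv.coe_addRight, ← Complex.exp_add]
  congr 1
  push_cast
  ring

lemma Gt_shift (d : ℕ) (hd : 0 < d) (gt : Fin d → ℂ) (β : ℤ) (z : ℂ) (t : ℝ) :
    Gt d gt (z + β * Real.sqrt (2 * Real.pi / d)) (t + β) = Gt d gt z t := by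
  have hdR : (d:ℝ) ≠ 0 := Nat.cast_ne_zero.mpr hd.ne'
  have hdC : (d:ℂ) ≠ 0 := Nat.cast_ne_zero.mpr hd.ne'
  have hb2 : ((Real.sqrt (Real.pi / (2 * d)) : ℝ) : ℂ)^2 = (Real.pi:ℂ)/(2*d) := by
    have h : (Real.sqrt (Real.pi / (2 * d)))^2 = Real.pi / (2*d) :=
      Real.sq_sqrt (by positivity)
    rw [← Complex.ofReal_pow, h]
    push_cast
    ring
  have hs : (Real.sqrt (2 * Real.pi / d) : ℝ) = 2 * Real.sqrt (Real.pi / (2 * d)) := by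
    rw [show (2 * Real.pi / d : ℝ) = 2^2 * (Real.pi / (2*d)) by field_simp,
      Real.sqrt_mul (by norm_num), Real.sqrt_sq (by norm_num : (0:ℝ) ≤ 2)]
  rw [hs]
  simp only [Gt, mul_assoc]
  congr 1
  rw [Finset.mul_sum, Finset.mul_sum]
  refine Finset.sum_congr rfl fun m _ => ?_
  set b : ℂ := ((Real.sqrt (Real.pi / (2 * d)) : ℝ) : ℂ) with hbdef
  have harg : (Real.pi : ℂ) * (m:ℂ) / d - I * ((z + (β:ℂ) * ((2 * Real.sqrt (Real.pi / (2 * d)) : ℝ) : ℂ)) * b)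
      = ((Real.pi : ℂ) * (m:ℂ) / d - I * (z * b)) + Real.pi * (I/(d:ℂ)) * ((-β : ℤ) : ℂ) := by
    push_cast
    linear_combination (-2*I*(β:ℂ)) * hb2
  rw [harg, theta_quasi]
  have key : Complex.exp (-(z + (β:ℂ) * ((2 * Real.sqrt (Real.pi / (2 * d)) : ℝ) : ℂ)) ^ 2 / 2) *
        Complex.exp (-(2 * ((Real.pi:ℂ) * (I * ((m:ℂ) * ((t + (β:ℝ) : ℝ) : ℂ))))) / d) *
        Complex.exp (-((Real.pi:ℂ) * I * (I/(d:ℂ)) * (((-β : ℤ):ℂ))^2) - 2*I*(((-β : ℤ):ℂ))*((Real.pi:ℂ) * (m:ℂ) / d - I * (z * b)))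
      = Complex.exp (-z ^ 2 / 2) * Complex.exp (-(2 * ((Real.pi:ℂ) * (I * ((m:ℂ) * (t:ℂ))))) / d) := by
    rw [← Complex.exp_add, ← Complex.exp_add, ← Complex.exp_add]
    congr 1
    push_cast
    linear_combination (-2*(β:ℂ)*z*b - Real.pi*(β:ℂ)^2/(d:ℂ)) * I_sq + (-2*(β:ℂ)^2) * hb2
  linear_combination (gt m * Theta3 ((Real.pi:ℂ) * (m:ℂ) / d - I * (z * b)) (I/(d:ℂ))) * key

theorem zeros_shift_under_Xt (d : ℕ) (hd : 0 < d) (gt : Fin d → ℂ) :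
    (∀ (β : ℤ) (ζ : ℂ) (t : ℝ), Gt d gt ζ t = 0 →
        Gt d gt (ζ + β * Real.sqrt (2 * Real.pi / d)) (t + β) = 0) ∧
      ∀ (β : ℤ) (t : ℝ),
        {z : ℂ | Gt d gt z (t + β) = 0}
          = (fun z : ℂ => z + β * Real.sqrt (2 * Real.pi / d)) ''
              {z : ℂ | Gt d gt z t = 0} := by
  refine ⟨fun β ζ t h => by rw [Gt_shift d hd gt β ζ t]; exact h, fun β t => ?_⟩
  ext z
  simp only [Set.mem_setOf_eq, Set.mem_image]
  constructor
  · intro h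
    refine ⟨z - (β:ℂ) * Real.sqrt (2 * Real.pi / d), ?_, by ring⟩
    have h2 := Gt_shift d hd gt β (z - (β:ℂ) * Real.sqrt (2 * Real.pi / d)) t
    rw [sub_add_cancel] at h2
    rw [← h2]; exact h
  · rintro ⟨w, hw, rfl⟩
    rw [Gt_shift d hd gt β w t]; exact hw
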